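/- arXiv:math/0503399 — 2 statements merged into one kernel-verified Lean document; each statement's English description precedes it below -/
import Mathlib

section
/- Let D be a finite family of sets equipped with a type function with values in {0,…,n} satisfying: the intersection of any two members of types r₁ and r₂ is a finite union of members of type at most min(r₁,r₂), and the intersection of two distinct members of the same type r is a finite union of members of type strictly less than r. Suppose X = A ∪ (⋃_j P_{λ_j}) = A ∪ (⋃_l Q_{ν_l}) are two reduced decompositions of a set X, where A has type r and all P_{λ_j}, Q_{ν_l} have type at most r, each containing a point not lying in any other member of its decomposition besides possibly A. If additionally every member of D of type r has a point (an 'interior point') not contained in any member of D of type at most r other than itself, and membership of an interior point of one member in another member of type ≤ its own forces containment, then ⋃_j P_{λ_j} = ⋃_l Q_{ν_l}. -/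
/-- Lemma "poly-20" (abstracted): if
`X = A ∪ ⋃ P = A ∪ ⋃ Q` are two reduced decompositions, with `A` of type `r` and all members
of `P`, `Q` of type at most `r`, then `⋃ P = ⋃ Q`. -/
theorem reduced_decompositions_union_eq
    {X : Type*} (n : ℕ) (D : Finset (Set X))
    (type : Set X → ℕ) (htype : ∀ Q ∈ D, type Q ≤ n)
    (intD : Set X → Set X)
    (hint_sub : ∀ Q ∈ D, intD Q ⊆ Q)
    -- every member (in particular of type r) has an interior point
    (hint_ne : ∀ Q ∈ D, (intD Q).Nonempty)
    -- membership of an interior point of one member in another forces containment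
    (hint_forces : ∀ Q ∈ D, ∀ R ∈ D, (intD Q ∩ R).Nonempty → Q ⊆ R)
    -- intersection axioms of the family with types
    (h1 : ∀ Q ∈ D, ∀ R ∈ D, ∃ s : Finset (Set X), s ⊆ D ∧
      (∀ B ∈ s, type B ≤ min (type Q) (type R)) ∧ Q ∩ R = ⋃₀ ↑s)
    (h2 : ∀ Q ∈ D, ∀ R ∈ D, Q ≠ R → type Q = type R →
      ∃ s : Finset (Set X), s ⊆ D ∧ (∀ B ∈ s, type B < type Q) ∧ Q ∩ R = ⋃₀ ↑s)
    (r : ℕ) (A : Set X) (hA : A ∈ D) (hAr : type A = r)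
    (P Q : Finset (Set X)) (hP : P ⊆ D) (hQ : Q ⊆ D)
    (hPr : ∀ B ∈ P, type B ≤ r) (hQr : ∀ B ∈ Q, type B ≤ r)
    -- reducedness of the two decompositions
    (hPredA : ∀ B ∈ P, ¬ B ⊆ A ∧ ¬ A ⊆ B)
    (hPpair : ∀ B ∈ P, ∀ C ∈ P, B ≠ C → ¬ B ⊆ C)
    (hQredA : ∀ B ∈ Q, ¬ B ⊆ A ∧ ¬ A ⊆ B)
    (hQpair : ∀ B ∈ Q, ∀ C ∈ Q, B ≠ C → ¬ B ⊆ C)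
    -- each member contains a point lying in no other member of its decomposition besides possibly A
    (hPpt : ∀ B ∈ P, ∃ x ∈ B, ∀ C ∈ P, C ≠ B → x ∉ C)
    (hQpt : ∀ B ∈ Q, ∃ x ∈ B, ∀ C ∈ Q, C ≠ B → x ∉ C)
    (hEq : A ∪ ⋃₀ ↑P = A ∪ ⋃₀ ↑Q) :
    ⋃₀ (↑P : Set (Set X)) = ⋃₀ (↑Q : Set (Set X)) := by
  have key : ∀ (P' Q' : Finset (Set X)), P' ⊆ D → Q' ⊆ D →
      (∀ B ∈ P', ¬ B ⊆ A ∧ ¬ A ⊆ B) →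
      A ∪ ⋃₀ ↑P' ⊆ A ∪ ⋃₀ ↑Q' → ⋃₀ (↑P' : Set (Set X)) ⊆ ⋃₀ (↑Q' : Set (Set X)) := by
    intro P' Q' hP' hQ' hred hsub
    intro y hy
    obtain ⟨B, hBP, hyB⟩ := hy
    obtain ⟨x, hx⟩ := hint_ne B (hP' hBP)
    have hxB : x ∈ B := hint_sub B (hP' hBP) hx
    have hxU : x ∈ A ∪ ⋃₀ ↑Q' := hsub (Or.inr ⟨B, hBP, hxB⟩)
    rcases hxU with hxA | ⟨C, hCQ, hxC⟩
    · exact absurd (hint_forces B (hP' hBP) A hA ⟨x, hx, hxA⟩) (hred B hBP).1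
    · exact ⟨C, hCQ, hint_forces B (hP' hBP) C (hQ' hCQ) ⟨x, hx, hxC⟩ hyB⟩
  exact Set.Subset.antisymm
    (key P Q hP hQ hPredA hEq.le)
    (key Q P hQ hP hQredA hEq.ge)
end

section
/- Under the hypotheses of the preceding abstraction of a subdivision (D a finite family of subsets of P, each Q ∈ D with a distinguished nonempty subset int(Q) ⊆ Q such that P = ⋃ int(Q) and int(Q) ∩ R ≠ ∅ implies Q ⊆ R), and assuming additionally a dimension function dim : D → ℕ with the property that Q ⊆ R and Q ≠ R implies dim Q < dim R: every set X expressible as a finite union of elements of D admits a unique reduced decomposition, i.e. a presentation X = ⋃_{j=1}^s P_{λ_j} with distinct P_{λ_j} ∈ D such that no P_{λ_i} is contained in P_{λ_j} for i ≠ j. -/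
/-- Corollary "poly-21" (abstracted): relative to a subdivision-like family `D` with a
dimension function strictly increasing along proper inclusions, every set expressible as a
finite union of elements of `D` admits a unique reduced decomposition. -/
theorem subdivision_unique_reduced_decomposition
    {P : Type*} (D : Finset (Set P)) (int : Set P → Set P)
    (hsub : ∀ Q ∈ D, int Q ⊆ Q)
    (hne : ∀ Q ∈ D, (int Q).Nonempty)
    (hcover : (⋃ Q ∈ D, int Q) = Set.univ)
    (hforce : ∀ Q ∈ D, ∀ R ∈ D, (int Q ∩ R).Nonempty → Q ⊆ R)
    (dim : Set P → ℕ)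
    (hdim : ∀ Q ∈ D, ∀ R ∈ D, Q ⊆ R → Q ≠ R → dim Q < dim R) :
    ∀ X : Set P, (∃ s ⊆ D, X = ⋃₀ ↑s) →
      ∃! t : Finset (Set P), t ⊆ D ∧ ⋃₀ (↑t : Set (Set P)) = X ∧
        ∀ B ∈ t, ∀ C ∈ t, B ≠ C → ¬ B ⊆ C := by
  rintro X ⟨s, hsD, hX⟩
  classical
  set t : Finset (Set P) := s.filter (fun Q => ∀ R ∈ s, Q ⊆ R → Q = R) with ht
  have htD : t ⊆ D := fun Q hQ => hsD (Finset.mem_filter.mp hQ).1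
  have hmax : ∀ Q ∈ s, ∃ R ∈ t, Q ⊆ R := by
    intro Q hQ
    obtain ⟨R, hR, hRmax⟩ := Finset.exists_max_image (s.filter (fun R => Q ⊆ R)) dim
      ⟨Q, by simp [hQ]⟩
    rw [Finset.mem_filter] at hR
    refine ⟨R, Finset.mem_filter.mpr ⟨hR.1, ?_⟩, hR.2⟩
    intro R' hR' hRR'
    by_contra hne'
    have h1 := hdim R (hsD hR.1) R' (hsD hR') hRR' hne'
    have h2 := hRmax R' (Finset.mem_filter.mpr ⟨hR', hR.2.trans hRR'⟩)
    omega
  have hunion : ⋃₀ (↑t : Set (Set P)) = X := by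
    apply subset_antisymm
    · rw [hX]
      exact Set.sUnion_subset_sUnion (Finset.coe_subset.mpr (Finset.filter_subset _ _))
    · rw [hX]
      rintro x ⟨Q, hQ, hxQ⟩
      obtain ⟨R, hR, hQR⟩ := hmax Q hQ
      exact ⟨R, hR, hQR hxQ⟩
  have hred : ∀ B ∈ t, ∀ C ∈ t, B ≠ C → ¬ B ⊆ C := by
    intro B hB C hC hBC hsub'
    exact hBC ((Finset.mem_filter.mp hB).2 C (Finset.mem_filter.mp hC).1 hsub')
  refine ⟨t, ⟨htD, hunion, hred⟩, ?_⟩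
  rintro t' ⟨ht'D, ht'U, ht'red⟩
  have key : ∀ (a b : Finset (Set P)), a ⊆ D → b ⊆ D →
      ⋃₀ (↑a : Set (Set P)) = X → ⋃₀ (↑b : Set (Set P)) = X →
      (∀ B ∈ a, ∀ C ∈ a, B ≠ C → ¬ B ⊆ C) → a ⊆ b := by
    intro a b haD hbD haU hbU hared B hB
    obtain ⟨x, hx⟩ := hne B (haD hB)
    have hxB : x ∈ B := hsub B (haD hB) hx
    have hxX : x ∈ X := haU ▸ ⟨B, hB, hxB⟩
    obtain ⟨C, hC, hxC⟩ : ∃ C ∈ (↑b : Set (Set P)), x ∈ C := by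
      rw [← hbU] at hxX; exact hxX
    have hBC : B ⊆ C := hforce B (haD hB) C (hbD hC) ⟨x, hx, hxC⟩
    obtain ⟨y, hy⟩ := hne C (hbD hC)
    have hyC : y ∈ C := hsub C (hbD hC) hy
    have hyX : y ∈ X := hbU ▸ ⟨C, hC, hyC⟩
    obtain ⟨B', hB', hyB'⟩ : ∃ B' ∈ (↑a : Set (Set P)), y ∈ B' := by
      rw [← haU] at hyX; exact hyX
    have hCB' : C ⊆ B' := hforce C (hbD hC) B' (haD hB') ⟨y, hy, hyB'⟩
    have hBB' : B = B' := by
      by_contra h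
      exact hared B hB B' hB' h (hBC.trans hCB')
    have hBCeq : B = C := subset_antisymm hBC (hBB' ▸ hCB')
    rwa [hBCeq]
  exact Finset.Subset.antisymm (key t' t ht'D htD ht'U hunion ht'red)
    (key t t' htD ht'D hunion ht'U hred)
end
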